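/- Let A be a graded k-algebra and G a finite subgroup of graded algebra automorphisms of A with char k not dividing |G|, and e = (1/|G|) ∑_{g∈G} 1*g ∈ A*G. Then the map φ: A → e(A*G) defined by φ(a) = e(a*1) is an isomorphism of graded left A^G-modules, where the left A^G-module structure on e(A*G) is given by identifying A^G with e(A*G)e. -/

import Mathlib

/-!
STATEMENT 2 (Lemma 1.5(3)): with the skew group algebra `A*G` axiomatized as a ring `B` with
structure maps `ι : A → B` (`a ↦ a*1`) and `κ : G → Bˣ` (`g ↦ 1*g`), and averaging idempotent
`e`, the map `φ : A → e(A*G)`, `φ a = e(a*1)`, is an isomorphism of graded left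
`A^G`-modules, where `A^G` acts on `e(A*G)` through the identification `A^G ≅ e(A*G)e`,
`c ↦ e(c*1)e`.
-/

theorem stmt_2
    (k : Type) [Field k]
    (A : Type) [Ring A] [Algebra k A]
    (𝒜 : ℕ → Submodule k A) [GradedAlgebra 𝒜]
    (G : Subgroup (A ≃ₐ[k] A)) [Fintype G]
    (hgr : ∀ g : G, ∀ i, ∀ a ∈ 𝒜 i, (g : A ≃ₐ[k] A) a ∈ 𝒜 i)
    (hchar : (Fintype.card G : k) ≠ 0)
    -- the skew group algebra B = A*G, axiomatized
    (B : Type) [Ring B] [Algebra k B]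
    (ℬ : ℕ → Submodule k B) [GradedAlgebra ℬ]
    (ι : A →ₐ[k] B) (κ : G →* Bˣ)
    (hskew : ∀ (g : G) (a : A), (κ g : B) * ι a = ι ((g : A ≃ₐ[k] A) a) * (κ g : B))
    (hbasis : ∀ b : B, ∃! c : G → A, b = ∑ g : G, ι (c g) * (κ g : B))
    (hιgr : ∀ i, ∀ a ∈ 𝒜 i, ι a ∈ ℬ i)
    (hκgr : ∀ g : G, (κ g : B) ∈ ℬ 0)
    (e : B) (he : e = (Fintype.card G : k)⁻¹ • ∑ g : G, (κ g : B)) :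
    -- φ : A → e(A*G), φ a = e(a*1) is:
    -- additive and k-linear,
    (∀ a b : A, e * ι (a + b) = e * ι a + e * ι b) ∧
    (∀ (c : k) (a : A), e * ι (c • a) = c • (e * ι a)) ∧
    -- a left A^G-module homomorphism (A^G acting on e(A*G) via A^G ≅ e(A*G)e),
    (∀ c a : A, (∀ g : G, (g : A ≃ₐ[k] A) c = c) →
      e * ι (c * a) = (e * ι c * e) * (e * ι a)) ∧
    -- injective,
    (∀ a b : A, e * ι a = e * ι b → a = b) ∧
    -- surjective onto e(A*G),
    (∀ b : B, ∃ a : A, e * ι a = e * b) ∧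
    -- and graded (degree-preserving).
    (∀ i, ∀ a ∈ 𝒜 i, e * ι a ∈ ℬ i) := by
  have hn : (Fintype.card G : k)⁻¹ ≠ 0 := inv_ne_zero hchar
  -- expansion of e * ι a
  have hexp : ∀ a : A, e * ι a =
      ∑ g : G, ι ((Fintype.card G : k)⁻¹ • ((g : A ≃ₐ[k] A) a)) * (κ g : B) := by
    intro a
    rw [he, smul_mul_assoc, Finset.sum_mul]
    rw [Finset.smul_sum]
    refine Finset.sum_congr rfl (fun g _ => ?_)
    rw [hskew, map_smul, smul_mul_assoc]
  -- e absorbs κ on the right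
  have hek : ∀ h : G, e * (κ h : B) = e := by
    intro h
    rw [he, smul_mul_assoc, Finset.sum_mul]
    congr 1
    refine Fintype.sum_equiv (Equiv.mulRight h) _ _ (fun g => ?_)
    simp only [Equiv.coe_mulRight, ← Units.val_mul, ← map_mul]
  -- e is idempotent
  have hee : e * e = e := by
    nth_rewrite 2 [he]
    rw [mul_smul_comm, Finset.mul_sum]
    have : ∑ g : G, e * (κ g : B) = (Fintype.card G : k) • e := by
      rw [Finset.sum_congr rfl (fun g _ => hek g), Finset.sum_const, Finset.card_univ,
        Nat.cast_smul_eq_nsmul]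
    rw [this, smul_smul, inv_mul_cancel₀ hchar, one_smul]
  -- e commutes with images of invariants
  have hec : ∀ c : A, (∀ g : G, (g : A ≃ₐ[k] A) c = c) → e * ι c = ι c * e := by
    intro c hc
    rw [he, smul_mul_assoc, mul_smul_comm, Finset.sum_mul, Finset.mul_sum]
    congr 1
    refine Finset.sum_congr rfl (fun g _ => ?_)
    rw [hskew, hc g]
  refine ⟨?_, ?_, ?_, ?_, ?_, ?_⟩
  · intro a b; rw [map_add, mul_add]
  · intro c a; rw [map_smul, mul_smul_comm]
  · intro c a hc
    calc e * ι (c * a) = (e * ι c) * ι a := by rw [map_mul, mul_assoc]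
      _ = ι c * (e * ι a) := by rw [hec c hc, mul_assoc]
      _ = (e * ι c * e) * (e * ι a) := by
          rw [hec c hc, mul_assoc (ι c * e) e, ← mul_assoc e e, hee, mul_assoc (ι c), ← mul_assoc e e (ι a), hee]
  · intro a b hab
    obtain ⟨c, -, hun⟩ := hbasis (e * ι a)
    have h1 := hun _ (hexp a)
    have h2 := hun _ (by rw [hab]; exact hexp b)
    have := congrFun (h1.trans h2.symm) 1
    have h3 : ((1 : G) : A ≃ₐ[k] A) a = a := rfl
    have h4 : ((1 : G) : A ≃ₐ[k] A) b = b := rfl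
    rw [h3, h4] at this
    exact smul_right_injective A hn this
  · intro b
    obtain ⟨c, hc, -⟩ := hbasis b
    refine ⟨∑ g : G, ((g⁻¹ : G) : A ≃ₐ[k] A) (c g), ?_⟩
    have key : ∀ g : G, e * ι (((g⁻¹ : G) : A ≃ₐ[k] A) (c g)) = e * (ι (c g) * (κ g : B)) := by
      intro g
      have hone : (κ g⁻¹ : B) * (κ g : B) = 1 := by
        rw [← Units.val_mul, ← map_mul, inv_mul_cancel, map_one, Units.val_one]
      calc e * ι (((g⁻¹ : G) : A ≃ₐ[k] A) (c g))
          = e * ι (((g⁻¹ : G) : A ≃ₐ[k] A) (c g)) * ((κ g⁻¹ : B) * (κ g : B)) := by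
            rw [hone, mul_one]
        _ = e * (ι (((g⁻¹ : G) : A ≃ₐ[k] A) (c g)) * (κ g⁻¹ : B)) * (κ g : B) := by
            rw [mul_assoc, mul_assoc, mul_assoc]
        _ = e * ((κ g⁻¹ : B) * ι (c g)) * (κ g : B) := by rw [← hskew]
        _ = (e * (κ g⁻¹ : B)) * ι (c g) * (κ g : B) := by simp only [mul_assoc]
        _ = e * (ι (c g) * (κ g : B)) := by rw [hek, mul_assoc]
    rw [map_sum, Finset.mul_sum, Finset.sum_congr rfl (fun g _ => key g), ← Finset.mul_sum, ← hc]
  · intro i a ha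
    have heB : e ∈ ℬ 0 := by
      rw [he]
      exact Submodule.smul_mem _ _ (Submodule.sum_mem _ (fun g _ => hκgr g))
    have := SetLike.mul_mem_graded heB (hιgr i a ha)
    rwa [zero_add] at this
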